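/- If a Polish group G has the Bergman property, then every commensurated subgroup of G is commensurate to a normal subgroup of G. -/

import Mathlib

open Pointwise

/-- A group has the Bergman property if every increasing exhaustion by symmetric
subsets containing `1` has some term whose some power is the whole group. -/
def BergmanProperty (G : Type*) [Group G] : Prop :=
  ∀ A : ℕ → Set G, (∀ n, A n ⊆ A (n + 1)) → (∀ n, (A n)⁻¹ = A n) →
    (1 : G) ∈ A 0 → (⋃ n, A n) = Set.univ →
    ∃ n k : ℕ, 1 ≤ k ∧ (A n) ^ k = Set.univ

/-- Two subgroups `H`, `K` of a group are commensurate if `H ∩ K` has finite index in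
both `H` and `K`. -/
def Commensurate {G : Type*} [Group G] (H K : Subgroup G) : Prop :=
  K.relIndex H ≠ 0 ∧ H.relIndex K ≠ 0

/-- A subgroup is commensurated if it is commensurate to all of its conjugates. -/
def Commensurated' {G : Type*} [Group G] (C : Subgroup G) : Prop :=
  ∀ g : G, Commensurate C (C.map (MulAut.conj g).toMonoidHom)

section BLwork

variable {G : Type*} [Group G]

/-- conjugation homomorphism -/
abbrev cjHom (g : G) : G →* G := (MulAut.conj g).toMonoidHom

lemma cjHom_apply (g x : G) : cjHom g x = g * x * g⁻¹ := rfl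

lemma cjHom_comp (g h : G) : (cjHom g).comp (cjHom h) = cjHom (g * h) := by
  ext x
  simp only [MonoidHom.comp_apply, cjHom_apply]
  group

/-- `Cov n X Y` : `X` is covered by at most `n` left translates of `Y`. -/
def Cov (n : ℕ) (X Y : Set G) : Prop :=
  ∃ T : Finset G, T.card ≤ n ∧ X ⊆ (T : Set G) * Y

lemma Cov.mono_nat {n m : ℕ} {X Y : Set G} (hnm : n ≤ m) (h : Cov n X Y) : Cov m X Y := by
  obtain ⟨T, hT, hX⟩ := h
  exact ⟨T, hT.trans hnm, hX⟩

lemma Cov.mono_left {n : ℕ} {X X' Y : Set G} (hX' : X' ⊆ X) (h : Cov n X Y) : Cov n X' Y := by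
  obtain ⟨T, hT, hX⟩ := h
  exact ⟨T, hT, hX'.trans hX⟩

lemma Cov.comp {n m : ℕ} {X Y Z : Set G} (h₁ : Cov n X Y) (h₂ : Cov m Y Z) :
    Cov (n * m) X Z := by
  classical
  obtain ⟨T, hT, hX⟩ := h₁
  obtain ⟨S, hS, hY⟩ := h₂
  refine ⟨T * S, le_trans Finset.card_mul_le (Nat.mul_le_mul hT hS), ?_⟩
  intro x hx
  obtain ⟨t, ht, y, hy, rfl⟩ := hX hx
  obtain ⟨s, hs, z, hz, rfl⟩ := hY hy
  refine ⟨t * s, by { rw [Finset.coe_mul]; exact Set.mul_mem_mul ht hs }, z, hz, by group⟩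

lemma Cov.image {n : ℕ} {X Y : Set G} (f : G →* G) (h : Cov n X Y) :
    Cov n (f '' X) (f '' Y) := by
  classical
  obtain ⟨T, hT, hX⟩ := h
  refine ⟨T.image f, (Finset.card_image_le).trans hT, ?_⟩
  rintro - ⟨x, hx, rfl⟩
  obtain ⟨t, ht, y, hy, rfl⟩ := hX hx
  exact ⟨f t, by simpa using ⟨t, ht, rfl⟩, f y, ⟨y, hy, rfl⟩, (map_mul f t y).symm⟩

lemma cjHom_image_cjHom_inv (g : G) (X : Set G) : cjHom g '' (cjHom g⁻¹ '' X) = X := by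
  rw [Set.image_image]
  have h : (fun x => cjHom g (cjHom g⁻¹ x)) = fun x : G => x := by
    funext x
    simp only [cjHom_apply]
    group
  rw [h, Set.image_id']

/-- transport of covers along conjugation, iff version -/
lemma cov_conj_iff (g : G) {n : ℕ} {X Y : Set G} :
    Cov n (cjHom g '' X) (cjHom g '' Y) ↔ Cov n X Y := by
  constructor
  · intro h
    have h2 := h.image (cjHom g⁻¹)
    rw [Set.image_image, Set.image_image] at h2
    have hc : ∀ Z : Set G, ((fun x => cjHom g⁻¹ (cjHom g x)) '' Z) = Z := by
      intro Z
      have h : (fun x => cjHom g⁻¹ (cjHom g x)) = fun x : G => x := by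
        funext x; simp only [cjHom_apply]; group
      rw [h, Set.image_id']
    rwa [hc, hc] at h2
  · exact fun h => h.image (cjHom g)

/-- covering `K` by cosets of `H` exists when the relative index is nonzero. -/
lemma cover_of_relindex {H K : Subgroup G} (h : H.relIndex K ≠ 0) :
    ∃ T : Finset G, (K : Set G) ⊆ (T : Set G) * (H : Set G) := by
  classical
  have hfin : Finite (K ⧸ H.subgroupOf K) := by
    rw [Subgroup.relIndex, Subgroup.index] at h
    exact (Nat.card_ne_zero.mp h).2
  set f : (K ⧸ H.subgroupOf K) → G := fun q => ((Quotient.out q : K) : G) with hf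
  have hran : (Set.range f).Finite := Set.finite_range f
  refine ⟨hran.toFinset, ?_⟩
  intro k hk
  set q : K ⧸ H.subgroupOf K := QuotientGroup.mk ⟨k, hk⟩ with hq
  have hout : (QuotientGroup.mk (Quotient.out q) : K ⧸ H.subgroupOf K) =
      QuotientGroup.mk ⟨k, hk⟩ := QuotientGroup.out_eq' q
  have hmem : (Quotient.out q : K)⁻¹ * ⟨k, hk⟩ ∈ H.subgroupOf K := QuotientGroup.eq.mp hout
  rw [Subgroup.mem_subgroupOf] at hmem
  refine ⟨f q, by simp [hran], (f q)⁻¹ * k, hmem, by group⟩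

/-- a finite cover by cosets gives nonzero relative index. -/
lemma relindex_ne_zero_of_cover {H K : Subgroup G} (T : Finset G)
    (hc : (K : Set G) ⊆ (T : Set G) * (H : Set G)) : H.relIndex K ≠ 0 := by
  classical
  rw [Subgroup.relIndex, Subgroup.index, Nat.card_ne_zero]
  refine ⟨⟨QuotientGroup.mk 1⟩, ?_⟩
  have hchoice : ∀ q : K ⧸ H.subgroupOf K, ∃ t, t ∈ T ∧
      (t⁻¹ * ((Quotient.out q : K) : G)) ∈ H := by
    intro q
    have hm : ((Quotient.out q : K) : G) ∈ (T : Set G) * (H : Set G) :=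
      hc (Quotient.out q : K).2
    obtain ⟨t, ht, h, hh, hth⟩ := Set.mem_mul.mp hm
    refine ⟨t, ht, ?_⟩
    rw [← hth]
    simpa [mul_assoc] using hh
  choose t ht hmem using hchoice
  have hinj : Function.Injective (fun q => (⟨t q, ht q⟩ : {x // x ∈ T})) := by
    intro q q' hqq'
    simp only [Subtype.mk_eq_mk] at hqq'
    have h1 := hmem q
    have h2 := hmem q'
    rw [hqq'] at h1
    have hHmem : ((Quotient.out q : K) : G)⁻¹ * ((Quotient.out q' : K) : G) ∈ H := by
      have := H.mul_mem (H.inv_mem h1) h2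
      simpa [mul_assoc] using this
    have hsub : (Quotient.out q : K)⁻¹ * (Quotient.out q' : K) ∈ H.subgroupOf K := by
      rwa [Subgroup.mem_subgroupOf]
    have heq : (QuotientGroup.mk (Quotient.out q) : K ⧸ H.subgroupOf K) =
        QuotientGroup.mk (Quotient.out q') := QuotientGroup.eq.mpr hsub
    rwa [QuotientGroup.out_eq', QuotientGroup.out_eq'] at heq
  exact Finite.of_injective _ hinj

/-! ### conjugates, intersections, and the minimax quantity -/

variable (C : Subgroup G)

/-- conjugate subgroup -/
def cSub (g : G) : Subgroup G := C.map (cjHom g)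

lemma coe_cSub (g : G) : (cSub C g : Set G) = cjHom g '' (C : Set G) :=
  Subgroup.coe_map _ _

lemma cSub_one : cSub C 1 = C := by
  have h : cjHom (1 : G) = MonoidHom.id G := by
    ext x; simp [cjHom_apply]
  rw [cSub, h, Subgroup.map_id]

lemma cSub_map (g h : G) : (cSub C h).map (cjHom g) = cSub C (g * h) := by
  rw [cSub, cSub, Subgroup.map_map, cjHom_comp]

lemma image_coe_cSub (g h : G) :
    cjHom g '' (cSub C h : Set G) = (cSub C (g * h) : Set G) := by
  rw [← Subgroup.coe_map, cSub_map]

/-- minimal number of cosets needed (junk value if no finite cover exists) -/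
noncomputable def cnum (X Y : Set G) : ℕ := sInf {n | Cov n X Y}

lemma cnum_le {X Y : Set G} {n : ℕ} (h : Cov n X Y) : cnum X Y ≤ n := Nat.sInf_le h

lemma cov_cnum {X Y : Set G} (h : ∃ n, Cov n X Y) : Cov (cnum X Y) X Y := Nat.sInf_mem h

lemma cnum_mono_left {X X' Y : Set G} (hX' : X' ⊆ X) (hex : ∃ n, Cov n X Y) :
    cnum X' Y ≤ cnum X Y := cnum_le ((cov_cnum hex).mono_left hX')

lemma cnum_conj (g : G) (X Y : Set G) :
    cnum (cjHom g '' X) (cjHom g '' Y) = cnum X Y := by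
  unfold cnum
  congr 1
  ext n
  exact cov_conj_iff g

/-- finite intersections of conjugates -/
def KSub (S : Finset G) : Subgroup G := ⨅ h ∈ S, cSub C h

lemma mem_KSub {S : Finset G} {x : G} : x ∈ KSub C S ↔ ∀ h ∈ S, x ∈ cSub C h := by
  simp [KSub, Subgroup.mem_iInf]

lemma KSub_le {S : Finset G} {h : G} (hh : h ∈ S) : KSub C S ≤ cSub C h :=
  iInf₂_le h hh

lemma KSub_mono {S S' : Finset G} (hss : S ⊆ S') : KSub C S' ≤ KSub C S :=
  le_iInf₂ fun h hh => iInf₂_le h (hss hh)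

section WithBound

variable {C} {M : ℕ} (hM : ∀ g h : G, Cov M (cSub C g : Set G) (cSub C h : Set G))

include hM

lemma cov_KSub {S : Finset G} (hS : S.Nonempty) (h : G) :
    Cov M (KSub C S : Set G) (cSub C h : Set G) := by
  obtain ⟨g₀, hg₀⟩ := hS
  exact (hM g₀ h).mono_left (SetLike.coe_subset_coe.mpr (KSub_le C hg₀))

/-- max over all conjugates of the covering number of a finite intersection -/
noncomputable def mval (S : Finset G) : ℕ :=
  sSup (Set.range fun h => cnum (KSub C S : Set G) (cSub C h : Set G))

lemma mval_bdd {S : Finset G} (hS : S.Nonempty) :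
    BddAbove (Set.range fun h => cnum (KSub C S : Set G) (cSub C h : Set G)) := by
  refine ⟨M, ?_⟩
  rintro - ⟨h, rfl⟩
  exact cnum_le (cov_KSub hM hS h)

lemma cnum_le_mval {S : Finset G} (hS : S.Nonempty) (h : G) :
    cnum (KSub C S : Set G) (cSub C h : Set G) ≤ mval (C := C) S :=
  le_csSup (mval_bdd hM hS) ⟨h, rfl⟩

lemma mval_attained {S : Finset G} (hS : S.Nonempty) :
    ∃ h, cnum (KSub C S : Set G) (cSub C h : Set G) = mval (C := C) S :=
  Nat.sSup_mem (Set.range_nonempty _) (mval_bdd hM hS)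

lemma mval_le_M {S : Finset G} (hS : S.Nonempty) : mval (C := C) S ≤ M := by
  refine csSup_le (Set.range_nonempty _) ?_
  rintro - ⟨h, rfl⟩
  exact cnum_le (cov_KSub hM hS h)

lemma mval_mono {S₁ S₂ : Finset G} (h1 : S₁.Nonempty) (hsub : S₁ ⊆ S₂) :
    mval (C := C) S₂ ≤ mval (C := C) S₁ := by
  refine csSup_le (Set.range_nonempty _) ?_
  rintro - ⟨h, rfl⟩
  refine le_trans (cnum_mono_left ?_ ⟨M, cov_KSub hM h1 h⟩) (cnum_le_mval hM h1 h)
  exact SetLike.coe_subset_coe.mpr (KSub_mono C hsub)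

end WithBound

/-- the minimax value -/
noncomputable def mstar : ℕ := sInf {t | ∃ S : Finset G, S.Nonempty ∧ mval (C := C) S = t}

/-- good finite intersections: those achieving the minimax -/
def Kgood (S : Finset G) : Prop := S.Nonempty ∧ mval (C := C) S = mstar C

lemma exists_Kgood : ∃ S, Kgood C S := by
  have h : mstar C ∈ {t | ∃ S : Finset G, S.Nonempty ∧ mval (C := C) S = t} :=
    Nat.sInf_mem ⟨mval (C := C) {1}, {1}, Finset.singleton_nonempty 1, rfl⟩
  obtain ⟨S, hS, heq⟩ := h
  exact ⟨S, hS, heq⟩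

lemma mstar_le {S : Finset G} (hS : S.Nonempty) : mstar C ≤ mval (C := C) S :=
  Nat.sInf_le ⟨S, hS, rfl⟩

section WithBound2

variable {C} {M : ℕ} (hM : ∀ g h : G, Cov M (cSub C g : Set G) (cSub C h : Set G))

include hM

lemma Kgood_sup [DecidableEq G] {F : Finset (Finset G)} (hne : F.Nonempty) (hF : ∀ S ∈ F, Kgood C S) :
    Kgood C (F.sup id) := by
  classical
  obtain ⟨S₁, hS₁⟩ := hne
  have hS₁sub : S₁ ⊆ F.sup id := Finset.le_sup (f := id) hS₁
  have hS₁ne : S₁.Nonempty := (hF S₁ hS₁).1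
  have hne2 : (F.sup id).Nonempty := hS₁ne.mono hS₁sub
  refine ⟨hne2, le_antisymm ?_ (mstar_le C hne2)⟩
  calc mval (C := C) (F.sup id) ≤ mval (C := C) S₁ := mval_mono hM hS₁ne hS₁sub
    _ = mstar C := (hF S₁ hS₁).2

end WithBound2

/-! ### the sandwich lemma -/

lemma sandwich {Z K B : Subgroup G} (hZK : Z ≤ K) {m : ℕ}
    (hmin : ∀ T : Finset G, (Z : Set G) ⊆ (T : Set G) * (B : Set G) → m ≤ T.card)
    (T : Finset G) (hTcard : T.card ≤ m)
    (hKB : (K : Set G) ⊆ (T : Set G) * (B : Set G)) :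
    ∀ k ∈ K, ∃ z, z ∈ Z ∧ z⁻¹ * k ∈ B := by
  classical
  intro k hk
  obtain ⟨t₀, ht₀, b₁, hb₁, hteq⟩ := Set.mem_mul.mp (hKB hk)
  by_cases hcase : ∃ z, z ∈ Z ∧ t₀⁻¹ * z ∈ B
  · obtain ⟨z, hz, hzb⟩ := hcase
    refine ⟨z, hz, ?_⟩
    have heq : z⁻¹ * k = (t₀⁻¹ * z)⁻¹ * b₁ := by rw [← hteq]; group
    rw [heq]
    exact B.mul_mem (B.inv_mem hzb) hb₁
  · exfalso
    push_neg at hcase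
    have ht₀T : t₀ ∈ T := ht₀
    have hcover : (Z : Set G) ⊆ ((T.erase t₀ : Finset G) : Set G) * (B : Set G) := by
      intro z hz
      obtain ⟨t, ht, b, hb, htb⟩ := Set.mem_mul.mp (hKB (hZK hz))
      have htne : t ≠ t₀ := by
        rintro rfl
        refine hcase z hz ?_
        rw [← htb]
        simpa [mul_assoc] using hb
      exact ⟨t, Finset.mem_coe.mpr (Finset.mem_erase.mpr ⟨htne, Finset.mem_coe.mp ht⟩), b, hb, htb⟩
    have hle := hmin _ hcover
    rw [Finset.card_erase_of_mem ht₀T] at hle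
    have hpos : 0 < T.card := Finset.card_pos.mpr ⟨t₀, ht₀T⟩
    omega

/-! ### the key covering lemma -/

lemma key_cover [DecidableEq G] {C : Subgroup G} {M : ℕ}
    (hM : ∀ g h : G, Cov M (cSub C g : Set G) (cSub C h : Set G))
    (F : Finset (Finset G)) (hne : F.Nonempty) (hF : ∀ S ∈ F, Kgood C S) :
    ∃ T : Finset G, T.card ≤ M * M ∧
      ((Subgroup.closure (⋃ S ∈ F, (KSub C S : Set G)) : Subgroup G) : Set G) ⊆
        (T : Set G) * (C : Set G) := by
  set UF := F.sup id with hUF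
  have hgood : Kgood C UF := Kgood_sup hM hne hF
  set Z := KSub C UF with hZ
  obtain ⟨hp, hcnum⟩ := mval_attained hM hgood.1
  set B := cSub C hp with hB
  have hcnumZ : cnum (Z : Set G) (B : Set G) = mstar C := by rw [hcnum, hgood.2]
  have hminZ : ∀ T : Finset G, (Z : Set G) ⊆ (T : Set G) * (B : Set G) → mstar C ≤ T.card := by
    intro T hT
    rw [← hcnumZ]
    exact cnum_le ⟨T, le_refl _, hT⟩
  have hcovZ : Cov (mstar C) (Z : Set G) (B : Set G) := by
    rw [← hcnumZ]
    exact cov_cnum ⟨M, cov_KSub hM hgood.1 hp⟩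
  have hZle : ∀ S ∈ F, Z ≤ KSub C S := by
    intro S hS
    exact KSub_mono C (Finset.le_sup (f := id) hS)
  have hsand : ∀ S ∈ F, ∀ k ∈ KSub C S, ∃ z, z ∈ Z ∧ z⁻¹ * k ∈ B := by
    intro S hS
    have hSne := (hF S hS).1
    have hcovK : Cov (mstar C) (KSub C S : Set G) (B : Set G) := by
      have h1 : cnum (KSub C S : Set G) (B : Set G) ≤ mval (C := C) S :=
        cnum_le_mval hM hSne hp
      rw [(hF S hS).2] at h1
      exact (cov_cnum ⟨M, cov_KSub hM hSne hp⟩).mono_nat h1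
    obtain ⟨T, hTc, hTcov⟩ := hcovK
    exact sandwich (hZle S hS) hminZ T hTc hTcov
  -- the subgroup U inside B generated by the traces
  set genU : Set G := ⋃ S ∈ F, ((KSub C S : Set G) ∩ (B : Set G)) with hgenU
  set U := Subgroup.closure genU with hU
  have hgenU_sub : ∀ S ∈ F, ∀ x, x ∈ KSub C S → x ∈ B → x ∈ U := by
    intro S hS x h1 h2
    exact Subgroup.subset_closure (Set.mem_iUnion₂.mpr ⟨S, hS, h1, h2⟩)
  have hUB : U ≤ cSub C hp := by
    rw [hU]
    refine Subgroup.closure_le _ |>.mpr ?_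
    intro x hx
    obtain ⟨S, hS, h1, h2⟩ := Set.mem_iUnion₂.mp hx
    exact h2
  -- main commuting property
  have hmain : ∀ u ∈ U, (∀ z ∈ Z, ∃ z' ∈ Z, ∃ u' ∈ U, u * z = z' * u') ∧
      (∀ z ∈ Z, ∃ z' ∈ Z, ∃ u' ∈ U, u⁻¹ * z = z' * u') := by
    intro u hu
    induction hu using Subgroup.closure_induction with
    | mem x hx =>
      obtain ⟨S, hS, hxK, hxB⟩ := Set.mem_iUnion₂.mp hx
      constructor
      · intro z hz
        have hxz : x * z ∈ KSub C S := (KSub C S).mul_mem hxK (hZle S hS hz)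
        obtain ⟨z', hz', hb⟩ := hsand S hS (x * z) hxz
        refine ⟨z', hz', z'⁻¹ * (x * z), ?_, by group⟩
        refine hgenU_sub S hS _ ?_ hb
        exact (KSub C S).mul_mem ((KSub C S).inv_mem (hZle S hS hz')) hxz
      · intro z hz
        have hxz : x⁻¹ * z ∈ KSub C S := (KSub C S).mul_mem ((KSub C S).inv_mem hxK) (hZle S hS hz)
        obtain ⟨z', hz', hb⟩ := hsand S hS (x⁻¹ * z) hxz
        refine ⟨z', hz', z'⁻¹ * (x⁻¹ * z), ?_, by group⟩
        refine hgenU_sub S hS _ ?_ hb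
        exact (KSub C S).mul_mem ((KSub C S).inv_mem (hZle S hS hz')) hxz
    | one =>
      constructor <;>
        · intro z hz
          exact ⟨z, hz, 1, U.one_mem, by group⟩
    | mul x y hx hy Px Py =>
      constructor
      · intro z hz
        obtain ⟨z₁, hz₁, u₁, hu₁, he₁⟩ := Py.1 z hz
        obtain ⟨z₂, hz₂, u₂, hu₂, he₂⟩ := Px.1 z₁ hz₁
        refine ⟨z₂, hz₂, u₂ * u₁, U.mul_mem hu₂ hu₁, ?_⟩
        calc x * y * z = x * (y * z) := by group
          _ = x * (z₁ * u₁) := by rw [he₁]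
          _ = (x * z₁) * u₁ := by group
          _ = (z₂ * u₂) * u₁ := by rw [he₂]
          _ = z₂ * (u₂ * u₁) := by group
      · intro z hz
        obtain ⟨z₁, hz₁, u₁, hu₁, he₁⟩ := Px.2 z hz
        obtain ⟨z₂, hz₂, u₂, hu₂, he₂⟩ := Py.2 z₁ hz₁
        refine ⟨z₂, hz₂, u₂ * u₁, U.mul_mem hu₂ hu₁, ?_⟩
        calc (x * y)⁻¹ * z = y⁻¹ * (x⁻¹ * z) := by group
          _ = y⁻¹ * (z₁ * u₁) := by rw [he₁]
          _ = (y⁻¹ * z₁) * u₁ := by group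
          _ = (z₂ * u₂) * u₁ := by rw [he₂]
          _ = z₂ * (u₂ * u₁) := by group
    | inv x hx Px =>
      refine ⟨Px.2, ?_⟩
      intro z hz
      obtain ⟨z', hz', u', hu', he⟩ := Px.1 z hz
      exact ⟨z', hz', u', hu', by rw [inv_inv]; exact he⟩
  -- the closure is contained in Z * U
  have hclos : ((Subgroup.closure (⋃ S ∈ F, (KSub C S : Set G)) : Subgroup G) : Set G) ⊆
      (Z : Set G) * (U : Set G) := by
    intro x hx
    rw [SetLike.mem_coe] at hx
    induction hx using Subgroup.closure_induction with
    | mem k hk =>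
      obtain ⟨S, hS, hkS⟩ := Set.mem_iUnion₂.mp hk
      obtain ⟨z, hz, hb⟩ := hsand S hS k hkS
      refine ⟨z, hz, z⁻¹ * k, ?_, by group⟩
      exact hgenU_sub S hS _ ((KSub C S).mul_mem ((KSub C S).inv_mem (hZle S hS hz)) hkS) hb
    | one => exact ⟨1, Z.one_mem, 1, U.one_mem, by group⟩
    | mul x y hx hy Px Py =>
      obtain ⟨z₁, hz₁, u₁, hu₁, he₁⟩ := Px
      obtain ⟨z₂, hz₂, u₂, hu₂, he₂⟩ := Py
      obtain ⟨z₃, hz₃, u₃, hu₃, he₃⟩ := (hmain u₁ hu₁).1 z₂ hz₂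
      have he₁' : z₁ * u₁ = x := he₁
      have he₂' : z₂ * u₂ = y := he₂
      refine ⟨z₁ * z₃, Z.mul_mem hz₁ hz₃, u₃ * u₂, U.mul_mem hu₃ hu₂, ?_⟩
      show z₁ * z₃ * (u₃ * u₂) = x * y
      calc z₁ * z₃ * (u₃ * u₂) = z₁ * ((z₃ * u₃) * u₂) := by group
        _ = z₁ * ((u₁ * z₂) * u₂) := by rw [he₃]
        _ = (z₁ * u₁) * (z₂ * u₂) := by group
        _ = x * y := by rw [he₁', he₂']
    | inv x hx Px =>
      obtain ⟨z₁, hz₁, u₁, hu₁, he₁⟩ := Px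
      obtain ⟨z₃, hz₃, u₃, hu₃, he₃⟩ := (hmain u₁⁻¹ (U.inv_mem hu₁)).1 z₁⁻¹ (Z.inv_mem hz₁)
      have he₁' : z₁ * u₁ = x := he₁
      refine ⟨z₃, hz₃, u₃, hu₃, ?_⟩
      show z₃ * u₃ = x⁻¹
      calc z₃ * u₃ = u₁⁻¹ * z₁⁻¹ := he₃.symm
        _ = (z₁ * u₁)⁻¹ := by group
        _ = x⁻¹ := by rw [he₁']
  -- assemble the cover
  obtain ⟨TZ, hTZc, hTZ⟩ := hcovZ
  obtain ⟨TB, hTBc, hTB⟩ := hM hp 1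
  rw [cSub_one] at hTB
  refine ⟨TZ * TB, ?_, ?_⟩
  · calc (TZ * TB).card ≤ TZ.card * TB.card := Finset.card_mul_le
      _ ≤ mstar C * M := Nat.mul_le_mul hTZc hTBc
      _ ≤ M * M := by
          have h1 : mstar C ≤ M :=
            le_trans (mstar_le C (Finset.singleton_nonempty 1)) (mval_le_M hM (Finset.singleton_nonempty 1))
          exact Nat.mul_le_mul_right _ h1
  · intro x hx
    obtain ⟨z, hz, u, hu, hzu⟩ := hclos hx
    obtain ⟨t, ht, b, hb, htb⟩ := Set.mem_mul.mp (hTZ hz)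
    have hbu : b * u ∈ cSub C hp := (cSub C hp).mul_mem hb (hUB hu)
    obtain ⟨s, hs, c, hc, hsc⟩ := Set.mem_mul.mp (hTB hbu)
    have hzu' : z * u = x := hzu
    have htb' : t * b = z := htb
    have hsc' : s * c = b * u := hsc
    refine ⟨t * s, ?_, c, hc, ?_⟩
    · rw [Finset.coe_mul]
      exact Set.mul_mem_mul ht hs
    · show t * s * c = x
      calc t * s * c = t * (s * c) := by group
        _ = t * (b * u) := by rw [hsc']
        _ = (t * b) * u := by group
        _ = z * u := by rw [htb']
        _ = x := hzu'

/-! ### the normal subgroup -/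

/-- generating set: union of all good intersections -/
def Jset : Set G := ⋃ S ∈ {S : Finset G | Kgood C S}, (KSub C S : Set G)

/-- the candidate normal subgroup -/
def Jgrp : Subgroup G := Subgroup.closure (Jset C)

lemma mem_Jset {x : G} : x ∈ Jset C ↔ ∃ S, Kgood C S ∧ x ∈ KSub C S := by
  simp [Jset]

lemma mem_Jgrp_decomp [DecidableEq G] {x : G} (hx : x ∈ Jgrp C) :
    ∃ F : Finset (Finset G), (∀ S ∈ F, Kgood C S) ∧
      x ∈ Subgroup.closure (⋃ S ∈ F, (KSub C S : Set G)) := by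
  induction hx using Subgroup.closure_induction with
  | mem k hk =>
    obtain ⟨S, hS, hkS⟩ := (mem_Jset C).mp hk
    refine ⟨{S}, by simpa using hS, Subgroup.subset_closure ?_⟩
    exact Set.mem_iUnion₂.mpr ⟨S, Finset.mem_singleton_self S, hkS⟩
  | one => exact ⟨∅, by simp, Subgroup.one_mem _⟩
  | mul x y hx hy Px Py =>
    obtain ⟨F₁, hF₁, hx₁⟩ := Px
    obtain ⟨F₂, hF₂, hy₂⟩ := Py
    refine ⟨F₁ ∪ F₂, ?_, ?_⟩
    · intro S hS
      rcases Finset.mem_union.mp hS with h | h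
      exacts [hF₁ S h, hF₂ S h]
    · have hmono : ∀ (F F' : Finset (Finset G)), F ⊆ F' →
          Subgroup.closure (⋃ S ∈ F, (KSub C S : Set G)) ≤
            Subgroup.closure (⋃ S ∈ F', (KSub C S : Set G)) := by
        intro F F' hFF'
        exact Subgroup.closure_mono (Set.iUnion₂_mono' fun S hS => ⟨S, hFF' hS, le_refl _⟩)
      exact Subgroup.mul_mem _ (hmono F₁ _ Finset.subset_union_left hx₁)
        (hmono F₂ _ Finset.subset_union_right hy₂)
  | inv x hx Px =>
    obtain ⟨F₁, hF₁, hx₁⟩ := Px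
    exact ⟨F₁, hF₁, Subgroup.inv_mem _ hx₁⟩

lemma KSub_subset_Jgrp {S : Finset G} (hS : Kgood C S) : KSub C S ≤ Jgrp C := by
  intro x hx
  exact Subgroup.subset_closure ((mem_Jset C).mpr ⟨S, hS, hx⟩)

/-! ### conjugation invariance -/

lemma KSub_map_conj [DecidableEq G] (g : G) (S : Finset G) :
    (KSub C S).map (cjHom g) = KSub C (S.image (g * ·)) := by
  ext x
  constructor
  · rintro ⟨y, hy, rfl⟩
    rw [mem_KSub]
    intro h' hh'

    obtain ⟨h, hh, rfl⟩ := Finset.mem_image.mp hh'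
    rw [← cSub_map]
    exact Subgroup.mem_map_of_mem _ ((mem_KSub C).mp hy h hh)
  · intro hx
    refine ⟨cjHom g⁻¹ x, ?_, ?_⟩
    · rw [SetLike.mem_coe, mem_KSub]
      intro h hh
      have hx2 : x ∈ cSub C (g * h) :=
        (mem_KSub C).mp hx (g * h) (Finset.mem_image.mpr ⟨h, hh, rfl⟩)
      rw [← cSub_map] at hx2
      obtain ⟨y, hy, rfl⟩ := hx2
      have : cjHom g⁻¹ (cjHom g y) = y := by
        simp only [cjHom_apply]; group
      rwa [this]
    · simp only [cjHom_apply]; group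

lemma coe_KSub_conj [DecidableEq G] (g : G) (S : Finset G) :
    cjHom g '' (KSub C S : Set G) = (KSub C (S.image (g * ·)) : Set G) := by
  rw [← Subgroup.coe_map, KSub_map_conj]

section WithBound3

variable {C : Subgroup G} {M : ℕ} (hM : ∀ g h : G, Cov M (cSub C g : Set G) (cSub C h : Set G))

include hM

lemma mval_conj [DecidableEq G] (g : G) {S : Finset G} (hS : S.Nonempty) :
    mval (C := C) (S.image (g * ·)) = mval (C := C) S := by
  unfold mval
  congr 1
  have hpt : ∀ h : G, cnum (KSub C (S.image (g * ·)) : Set G) (cSub C h : Set G)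
      = cnum (KSub C S : Set G) (cSub C (g⁻¹ * h) : Set G) := by
    intro h
    rw [← coe_KSub_conj]
    have h2 : (cSub C h : Set G) = cjHom g '' (cSub C (g⁻¹ * h) : Set G) := by
      rw [image_coe_cSub]
      congr 1
      group
    rw [h2, cnum_conj]
  ext t
  constructor
  · rintro ⟨h, rfl⟩
    exact ⟨g⁻¹ * h, (hpt h).symm⟩
  · rintro ⟨h, rfl⟩
    refine ⟨g * h, ?_⟩
    show cnum (KSub C (S.image (g * ·)) : Set G) (cSub C (g * h) : Set G)
      = cnum (KSub C S : Set G) (cSub C h : Set G)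
    rw [hpt (g * h)]
    have he : g⁻¹ * (g * h) = h := by group
    rw [he]

lemma Kgood_image [DecidableEq G] (g : G) {S : Finset G} (hS : Kgood C S) :
    Kgood C (S.image (g * ·)) :=
  ⟨hS.1.image _, by rw [mval_conj hM g hS.1, hS.2]⟩

lemma Jgrp_normal [DecidableEq G] : (Jgrp C).Normal := by
  constructor
  intro n hn g
  have himg : cjHom g '' Jset C ⊆ Jset C := by
    rintro - ⟨x, hx, rfl⟩
    obtain ⟨S, hS, hxS⟩ := (mem_Jset C).mp hx
    refine (mem_Jset C).mpr ⟨S.image (g * ·), Kgood_image hM g hS, ?_⟩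
    have : cjHom g x ∈ cjHom g '' (KSub C S : Set G) := ⟨x, hxS, rfl⟩
    rwa [coe_KSub_conj] at this
  have hmap : (Jgrp C).map (cjHom g) ≤ Jgrp C := by
    rw [Jgrp, MonoidHom.map_closure]
    exact Subgroup.closure_mono himg
  exact hmap (Subgroup.mem_map_of_mem _ hn)

end WithBound3

/-! ### relative index facts for the normal subgroup -/

lemma relindex_KSub (hrel : ∀ g : G, (cSub C g).relIndex C ≠ 0)
    (S : Finset G) : (KSub C S).relIndex C ≠ 0 := by
  classical
  induction S using Finset.induction_on with
  | empty =>
    have h : KSub C (∅ : Finset G) = ⊤ := by simp [KSub]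
    rw [h, Subgroup.relIndex_top_left]
    exact one_ne_zero
  | @insert a S ha IH =>
    have h : KSub C (insert a S) = cSub C a ⊓ KSub C S := by
      rw [KSub, Finset.iInf_insert]
      rfl
    rw [h]
    exact Subgroup.relIndex_inf_ne_zero (hrel a) IH

lemma Jgrp_relindex_left (hrel : ∀ g : G, (cSub C g).relIndex C ≠ 0) :
    (Jgrp C).relIndex C ≠ 0 := by
  obtain ⟨S₀, hS₀⟩ := exists_Kgood C
  intro h0
  have hdvd : (Jgrp C).relIndex C ∣ (KSub C S₀).relIndex C :=
    Subgroup.relIndex_dvd_of_le_left C (KSub_subset_Jgrp C hS₀)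
  rw [h0] at hdvd
  exact relindex_KSub C hrel S₀ (zero_dvd_iff.mp hdvd)

section Final

variable {C : Subgroup G} {M : ℕ} (hM : ∀ g h : G, Cov M (cSub C g : Set G) (cSub C h : Set G))

include hM

lemma Jgrp_relindex_right [DecidableEq G] : C.relIndex (Jgrp C) ≠ 0 := by
  classical
  have claim : ∀ f : Fin (M * M + 1) → G, (∀ i, f i ∈ Jgrp C) →
      ∃ i j, i ≠ j ∧ (f i)⁻¹ * (f j) ∈ C := by
    intro f hf
    choose Fi hFi hfi using fun i => mem_Jgrp_decomp (C := C) (hf i)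
    obtain ⟨S₀, hS₀⟩ := exists_Kgood C
    set Fbig : Finset (Finset G) :=
      insert S₀ ((Finset.univ : Finset (Fin (M * M + 1))).sup Fi) with hFbigdef
    have hFbig : ∀ S ∈ Fbig, Kgood C S := by
      intro S hS
      rcases Finset.mem_insert.mp hS with h | h
      · exact h ▸ hS₀
      · obtain ⟨i, _, hSi⟩ := Finset.mem_sup.mp h
        exact hFi i S hSi
    have hne : Fbig.Nonempty := ⟨S₀, Finset.mem_insert_self _ _⟩
    obtain ⟨T, hTc, hTcov⟩ := key_cover hM Fbig hne hFbig
    have hmem : ∀ i, f i ∈ (T : Set G) * (C : Set G) := by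
      intro i
      refine hTcov ?_
      rw [SetLike.mem_coe]
      have hmono : Subgroup.closure (⋃ S ∈ Fi i, (KSub C S : Set G)) ≤
          Subgroup.closure (⋃ S ∈ Fbig, (KSub C S : Set G)) := by
        refine Subgroup.closure_mono (Set.iUnion₂_mono' fun S hS => ⟨S, ?_, le_refl _⟩)
        exact Finset.mem_insert_of_mem (Finset.mem_sup.mpr ⟨i, Finset.mem_univ i, hS⟩)
      exact hmono (hfi i)
    choose t ht c hc hei using fun i => Set.mem_mul.mp (hmem i)
    have hcard : T.card < (Finset.univ : Finset (Fin (M * M + 1))).card := by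
      have : (Finset.univ : Finset (Fin (M * M + 1))).card = M * M + 1 := by
        simp
      omega
    obtain ⟨i, -, j, -, hij, heq⟩ :=
      Finset.exists_ne_map_eq_of_card_lt_of_maps_to hcard (fun i _ => ht i)
    refine ⟨i, j, hij, ?_⟩
    have h1 : t i * c i = f i := hei i
    have h2 : t j * c j = f j := hei j
    have hkey : (f i)⁻¹ * (f j) = (c i)⁻¹ * (c j) := by
      rw [← h1, ← h2, ← heq]
      group
    rw [hkey]
    exact C.mul_mem (C.inv_mem (hc i)) (hc j)
  rw [Subgroup.relIndex, Subgroup.index, Nat.card_ne_zero]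
  refine ⟨⟨QuotientGroup.mk 1⟩, ?_⟩
  by_contra hinf
  rw [not_finite_iff_infinite] at hinf
  set e := Infinite.natEmbedding ((Jgrp C) ⧸ C.subgroupOf (Jgrp C)) with he
  set x : Fin (M * M + 1) → (Jgrp C) := fun i => Quotient.out (e (i : ℕ)) with hx
  obtain ⟨i, j, hij, hCij⟩ := claim (fun i => ((x i : G))) (fun i => (x i).2)
  have hsub : (x i)⁻¹ * (x j) ∈ C.subgroupOf (Jgrp C) := by
    rw [Subgroup.mem_subgroupOf]
    exact_mod_cast hCij
  have heq2 : (QuotientGroup.mk (Quotient.out (e (i : ℕ))) :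
      (Jgrp C) ⧸ C.subgroupOf (Jgrp C)) = QuotientGroup.mk (Quotient.out (e (j : ℕ))) :=
    QuotientGroup.eq.mpr hsub
  rw [QuotientGroup.out_eq', QuotientGroup.out_eq'] at heq2
  exact hij (Fin.ext (e.injective heq2))

theorem BLcore (hrel : ∀ g : G, (cSub C g).relIndex C ≠ 0) :
    ∃ N : Subgroup G, N.Normal ∧ N.relIndex C ≠ 0 ∧ C.relIndex N ≠ 0 := by
  classical
  exact ⟨Jgrp C, Jgrp_normal hM, Jgrp_relindex_left C hrel, Jgrp_relindex_right hM⟩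

end Final


lemma cov_self (X : Set G) : Cov 1 X X :=
  ⟨{1}, by simp, fun x hx => ⟨1, by simp, x, hx, one_mul x⟩⟩

end BLwork

/-- If a Polish group has the Bergman property, then every commensurated subgroup is
commensurate to a normal subgroup. -/
theorem commensurated_commensurate_normal_of_bergman
    {G : Type*} [Group G] [TopologicalSpace G] [IsTopologicalGroup G] [PolishSpace G]
    (hB : BergmanProperty G) (C : Subgroup G) (hC : Commensurated' C) :
    ∃ N : Subgroup G, N.Normal ∧ Commensurate C N := by
  classical
  have hc1 : ∀ g : G, (cSub C g).relIndex C ≠ 0 := fun g => (hC g).1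
  have hc2 : ∀ g : G, C.relIndex (cSub C g) ≠ 0 := fun g => (hC g).2
  -- the exhaustion by commensuration bounds
  set A : ℕ → Set G := fun n =>
    {g | Cov (n + 1) (C : Set G) (cSub C g : Set G) ∧
      Cov (n + 1) (cSub C g : Set G) (C : Set G)} with hAdef
  have hmono : ∀ n, A n ⊆ A (n + 1) := by
    rintro n g ⟨h1, h2⟩
    exact ⟨h1.mono_nat (by omega), h2.mono_nat (by omega)⟩
  have e2 : ∀ g : G, cjHom g '' (C : Set G) = (cSub C g : Set G) := by
    intro g
    rw [coe_cSub]
  have e1 : ∀ g h : G, cjHom g '' (cSub C h : Set G) = (cSub C (g * h) : Set G) :=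
    fun g h => image_coe_cSub C g h
  have hsymm_half : ∀ n, ∀ g ∈ A n, g⁻¹ ∈ A n := by
    rintro n g ⟨h1, h2⟩
    constructor
    · -- Cov (n+1) C (cSub g⁻¹), from h2
      have h' := h2.image (cjHom g⁻¹)
      rw [e1 g⁻¹ g, e2 g⁻¹] at h'
      simpa [cSub_one] using h'
    · have h' := h1.image (cjHom g⁻¹)
      rw [e1 g⁻¹ g, e2 g⁻¹] at h'
      simpa [cSub_one] using h'
  have hsymm : ∀ n, (A n)⁻¹ = A n := by
    intro n
    ext g
    rw [Set.mem_inv]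
    constructor
    · intro h
      have := hsymm_half n g⁻¹ h
      rwa [inv_inv] at this
    · exact fun h => hsymm_half n g h
  have h1mem : (1 : G) ∈ A 0 := by
    constructor <;> rw [cSub_one] <;> exact (cov_self (C : Set G)).mono_nat (by omega)
  have hexh : (⋃ n, A n) = Set.univ := by
    rw [Set.eq_univ_iff_forall]
    intro g
    obtain ⟨T₁, hT₁⟩ := cover_of_relindex (hc1 g)
    obtain ⟨T₂, hT₂⟩ := cover_of_relindex (hc2 g)
    refine Set.mem_iUnion.mpr ⟨max T₁.card T₂.card, ⟨T₁, by omega, hT₁⟩, ⟨T₂, by omega, hT₂⟩⟩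
  obtain ⟨n, k, hk1, hAk⟩ := hB A hmono hsymm h1mem hexh
  -- iterated covering bounds on powers
  have hpow : ∀ j : ℕ, ∀ x ∈ (A n) ^ (j + 1),
      Cov ((n + 2) ^ (j + 1)) (C : Set G) (cSub C x : Set G) ∧
        Cov ((n + 2) ^ (j + 1)) (cSub C x : Set G) (C : Set G) := by
    intro j
    induction j with
    | zero =>
      intro x hx
      rw [pow_one] at hx ⊢
      exact ⟨hx.1.mono_nat (by omega), hx.2.mono_nat (by omega)⟩
    | succ j IH =>
      intro x hx
      rw [pow_succ] at hx
      obtain ⟨y, hy, g, hg, hyg⟩ := Set.mem_mul.mp hx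
      have hyg' : y * g = x := hyg
      obtain ⟨Cy1, Cy2⟩ := IH y hy
      obtain ⟨Cg1, Cg2⟩ := hg
      have Cyg : Cov (n + 1) (cSub C y : Set G) (cSub C (y * g) : Set G) := by
        have h' := Cg1.image (cjHom y)
        rwa [e2 y, e1 y g] at h'
      have Cgy : Cov (n + 1) (cSub C (y * g) : Set G) (cSub C y : Set G) := by
        have h' := Cg2.image (cjHom y)
        rwa [e2 y, e1 y g] at h'
      rw [← hyg']
      constructor
      · exact (Cy1.comp Cyg).mono_nat
          (by rw [pow_succ]; exact Nat.mul_le_mul (le_refl _) (by omega))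
      · exact (Cgy.comp Cy2).mono_nat
          (by rw [pow_succ, mul_comm]; exact Nat.mul_le_mul (le_refl _) (by omega))
  obtain ⟨j, rfl⟩ : ∃ j, k = j + 1 := ⟨k - 1, by omega⟩
  set M₀ := (n + 2) ^ (j + 1) with hM₀
  have hall : ∀ g : G, Cov M₀ (C : Set G) (cSub C g : Set G) ∧
      Cov M₀ (cSub C g : Set G) (C : Set G) := by
    intro g
    refine hpow j g ?_
    rw [hAk]
    trivial
  have hM : ∀ a b : G, Cov (M₀ * M₀) (cSub C a : Set G) (cSub C b : Set G) :=
    fun a b => ((hall a).2).comp ((hall b).1)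
  obtain ⟨N, hN, hr1, hr2⟩ := BLcore hM hc1
  exact ⟨N, hN, hr1, hr2⟩
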